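/- If a connected separable metrizable space X contains a non-empty open almost zero-dimensional subspace O with X \ O non-empty, then X is not σ-connected, i.e., X can be written as the union of countably many pairwise disjoint non-empty closed subsets. -/

import Mathlib

open Set TopologicalSpace

/-- A C-set: an intersection of clopen subsets. -/
def IsCSet {X : Type*} [TopologicalSpace X] (A : Set X) : Prop :=
  ∃ S : Set (Set X), (∀ s ∈ S, IsClopen s) ∧ A = ⋂₀ S

/-- A σC-set: a countable union of C-sets. -/
def IsSigmaCSet {X : Type*} [TopologicalSpace X] (A : Set X) : Prop :=
  ∃ f : ℕ → Set X, (∀ n, IsCSet (f n)) ∧ A = ⋃ n, f n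

/-- Almost zero-dimensional: every point has a neighborhood basis of C-sets. -/
def AlmostZeroDimensional (X : Type*) [TopologicalSpace X] : Prop :=
  ∀ x : X, ∀ U ∈ nhds x, ∃ A : Set X, IsCSet A ∧ A ∈ nhds x ∧ A ⊆ U

/-- Cohesive: every point has a neighborhood containing no non-empty clopen set. -/
def Cohesive (X : Type*) [TopologicalSpace X] : Prop :=
  ∀ x : X, ∃ U ∈ nhds x, ∀ A : Set X, A ⊆ U → IsClopen A → A = ∅

/-- Zero-dimensional: every point has a neighborhood basis of clopen sets. -/
def ZeroDimensional (X : Type*) [TopologicalSpace X] : Prop :=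
  ∀ x : X, ∀ U ∈ nhds x, ∃ V : Set X, IsClopen V ∧ x ∈ V ∧ V ⊆ U

/-- In a second countable space, every C-set is a countable intersection of clopen sets. -/
lemma IsCSet.exists_seq {Y : Type*} [TopologicalSpace Y] [SecondCountableTopology Y]
    {A : Set Y} (hA : IsCSet A) :
    ∃ D : ℕ → Set Y, (∀ n, IsClopen (D n)) ∧ A = ⋂ n, D n := by
  obtain ⟨S, hS, rfl⟩ := hA
  obtain ⟨T, hTc, hTS, hTU⟩ := TopologicalSpace.isOpen_sUnion_countable (compl '' S)
    (by rintro s ⟨t, ht, rfl⟩; exact (hS t ht).compl.isOpen)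
  obtain ⟨f, hf⟩ := (hTc.insert ∅).exists_eq_range (insert_nonempty _ _)
  refine ⟨fun n => (f n)ᶜ, ?_, ?_⟩
  · intro n
    show IsClopen (f n)ᶜ
    have hmem : f n ∈ insert ∅ T := hf ▸ mem_range_self n
    rcases hmem with h | h
    · rw [h]; exact isClopen_empty.compl
    · obtain ⟨s, hs, hrfl⟩ := hTS h
      rw [← hrfl, compl_compl]
      exact hS s hs
  · have h1 : (⋂₀ S)ᶜ = ⋃ n, f n := by
      rw [compl_sInter, ← hTU, ← sUnion_range, ← hf, sUnion_insert, empty_union]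
    have := congrArg compl h1
    rw [compl_compl, compl_iUnion] at this
    exact this

theorem not_sigmaConnected_of_open_azd {X : Type*} [TopologicalSpace X]
    [MetrizableSpace X] [SeparableSpace X] [ConnectedSpace X]
    {O : Set X} (hO : IsOpen O) (hOne : O.Nonempty) (hOc : Oᶜ.Nonempty)
    (hazd : AlmostZeroDimensional ↥O) :
    ∃ F : ℕ → Set X, (∀ n, IsClosed (F n)) ∧ (∀ n, (F n).Nonempty) ∧
      Pairwise (Function.onFun Disjoint F) ∧ (⋃ n, F n) = univ := by
  classical
  letI := TopologicalSpace.metrizableSpaceMetric X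
  haveI : SecondCountableTopology X := UniformSpace.secondCountable_of_separable X
  -- Step 1: C-set neighborhoods trapped in closed subsets of O
  have step1 : ∀ y : ↥O, ∃ A : Set ↥O, ∃ V : Set X, IsCSet A ∧ A ∈ nhds y ∧
      IsClosed V ∧ V ⊆ O ∧ Subtype.val '' A ⊆ V := by
    intro y
    obtain ⟨V, hVn, hVc, hVO⟩ := exists_mem_nhds_isClosed_subset (hO.mem_nhds y.2)
    have hpre : (Subtype.val ⁻¹' V : Set ↥O) ∈ nhds y :=
      continuous_subtype_val.continuousAt.preimage_mem_nhds hVn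
    obtain ⟨A, hACS, hAn, hAsub⟩ := hazd y _ hpre
    exact ⟨A, V, hACS, hAn, hVc, hVO, by rintro z ⟨w, hw, rfl⟩; exact hAsub hw⟩
  choose A V hACS hAn hVc hVO hAV using step1
  have hAclosedO : ∀ y : ↥O, IsClosed (A y) := by
    intro y
    obtain ⟨S, hS, hSeq⟩ := hACS y
    rw [hSeq]
    exact isClosed_sInter fun s hs => (hS s hs).isClosed
  -- Key: a closed subset of A y (in the subspace) is closed in X
  have key : ∀ (y : ↥O) (B : Set ↥O), IsClosed B → B ⊆ A y →
      IsClosed (Subtype.val '' B) := by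
    intro y B hB hBA
    have h1 : Subtype.val '' B ⊆ V y := (image_mono (f := Subtype.val) hBA).trans (hAV y)
    have h2 : closure (Subtype.val '' B) ⊆ V y := (hVc y).closure_subset_iff.mpr h1
    rw [← closure_eq_iff_isClosed]
    refine Subset.antisymm ?_ subset_closure
    intro z hz
    have hzO : z ∈ O := hVO y (h2 hz)
    have hmem : (⟨z, hzO⟩ : ↥O) ∈ closure B := closure_subtype.mpr hz
    rw [hB.closure_eq] at hmem
    exact ⟨_, hmem, rfl⟩
  -- countable subcover
  obtain ⟨T, hTc, hTU⟩ := TopologicalSpace.isOpen_iUnion_countable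
    (fun y : ↥O => Subtype.val '' interior (A y))
    (fun y => hO.isOpenMap_subtype_val _ isOpen_interior)
  have hmemW : ∀ x : ↥O, (x : X) ∈ ⋃ y, Subtype.val '' interior (A y) := by
    intro x
    exact mem_iUnion.mpr ⟨x, ⟨x, mem_interior_iff_mem_nhds.mpr (hAn x), rfl⟩⟩
  have hTne : T.Nonempty := by
    obtain ⟨x, hx⟩ := hOne
    have h := hmemW ⟨x, hx⟩
    rw [← hTU] at h
    obtain ⟨y, hy, -⟩ := mem_iUnion₂.mp h
    exact ⟨y, hy⟩
  obtain ⟨σ, hσ⟩ := hTc.exists_eq_range hTne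
  have hcov : ∀ x : ↥O, ∃ j : ℕ, x ∈ A (σ j) := by
    intro x
    have h := hmemW x
    rw [← hTU] at h
    obtain ⟨y, hyT, w, hw, hwx⟩ := mem_iUnion₂.mp h
    obtain ⟨j, rfl⟩ : ∃ j, σ j = y := by rwa [hσ, mem_range] at hyT
    refine ⟨j, ?_⟩
    have : w = x := Subtype.val_injective hwx
    rw [← this]
    exact interior_subset hw
  -- countable clopen representations
  have hseq := fun j : ℕ => (hACS (σ j)).exists_seq
  choose D hDcl hDeq using hseq
  -- exit sets
  set E : ℕ → ℕ → Set ↥O := fun j m => (⋂ k ∈ Finset.range m, D j k) \ D j m with hE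
  have hEclopen : ∀ j m, IsClopen (E j m) :=
    fun j m => (isClopen_biInter_finset (fun k _ => hDcl j k)).diff (hDcl j m)
  have hEdisj : ∀ j m m', m < m' → Disjoint (E j m) (E j m') := by
    intro j m m' h
    refine disjoint_left.mpr fun x hx hx' => ?_
    exact hx.2 (mem_iInter₂.mp hx'.1 m (Finset.mem_range.mpr h))
  have hEA : ∀ j m, Disjoint (A (σ j)) (E j m) := by
    intro j m
    refine disjoint_left.mpr fun x hx hx' => ?_
    have : x ∈ D j m := by
      rw [hDeq j] at hx
      exact mem_iInter.mp hx m
    exact hx'.2 this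
  have hEexit : ∀ j (x : ↥O), x ∉ A (σ j) → ∃ m, x ∈ E j m := by
    intro j x hx
    have hex : ∃ m, x ∉ D j m := by
      by_contra h
      push_neg at h
      exact hx (by rw [hDeq j]; exact mem_iInter.mpr h)
    refine ⟨Nat.find hex, ?_, Nat.find_spec hex⟩
    exact mem_iInter₂.mpr fun k hk =>
      not_not.mp (Nat.find_min hex (Finset.mem_range.mp hk))
  -- the pieces
  set Q : ((j : ℕ) × (Fin j → ℕ)) → Set ↥O :=
    fun p => A (σ p.1) ∩ ⋂ i : Fin p.1, E i.1 (p.2 i) with hQ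
  have hQsub : ∀ p, Q p ⊆ A (σ p.1) := fun p => inter_subset_left
  have hQsubE : ∀ (p) (i : Fin p.1), Q p ⊆ E i.1 (p.2 i) :=
    fun p i x hx => mem_iInter.mp hx.2 i
  have hQclosed : ∀ p, IsClosed (Q p) :=
    fun p => (hAclosedO _).inter (isClosed_iInter fun i => (hEclopen _ _).isClosed)
  have hQlt : ∀ (j : ℕ) (t : Fin j → ℕ) (j' : ℕ) (t' : Fin j' → ℕ), j < j' →
      Disjoint (Q ⟨j, t⟩) (Q ⟨j', t'⟩) := by
    intro j t j' t' h
    exact ((hEA j (t' ⟨j, h⟩)).mono (hQsub ⟨j, t⟩) (hQsubE ⟨j', t'⟩ ⟨j, h⟩))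
  have hQdisj : Pairwise (Function.onFun Disjoint Q) := by
    rintro ⟨j, t⟩ ⟨j', t'⟩ hne
    rcases Nat.lt_trichotomy j j' with h | h | h
    · exact hQlt j t j' t' h
    · subst h
      have htne : t ≠ t' := fun h => hne (by rw [h])
      obtain ⟨i, hi⟩ := Function.ne_iff.mp htne
      have hd : Disjoint (E i.1 (t i)) (E i.1 (t' i)) := by
        rcases lt_or_gt_of_ne hi with h | h
        · exact hEdisj _ _ _ h
        · exact (hEdisj _ _ _ h).symm
      exact hd.mono (hQsubE ⟨j, t⟩ i) (hQsubE ⟨j, t'⟩ i)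
    · exact (hQlt j' t' j t h).symm
  have hQcov : ∀ x : ↥O, ∃ p, x ∈ Q p := by
    intro x
    have hex := hcov x
    have hxA : x ∈ A (σ (Nat.find hex)) := Nat.find_spec hex
    have hmin : ∀ i : Fin (Nat.find hex), x ∉ A (σ i.1) := fun i => Nat.find_min hex i.2
    choose t ht using fun i : Fin (Nat.find hex) => hEexit i.1 x (hmin i)
    exact ⟨⟨Nat.find hex, t⟩, hxA, mem_iInter.mpr ht⟩
  -- back in X
  set G : ((j : ℕ) × (Fin j → ℕ)) → Set X := fun p => Subtype.val '' Q p with hG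
  have hGclosed : ∀ p, IsClosed (G p) := fun p => key (σ p.1) _ (hQclosed p) (hQsub p)
  have hGsubO : ∀ p, G p ⊆ O := by
    rintro p z ⟨w, -, rfl⟩
    exact w.2
  have hGdisj : Pairwise (Function.onFun Disjoint G) := fun p q hpq =>
    Set.disjoint_image_of_injective Subtype.val_injective (hQdisj hpq)
  have hGunion : ⋃ p, G p = O := by
    refine Subset.antisymm (iUnion_subset hGsubO) fun z hz => ?_
    obtain ⟨p, hp⟩ := hQcov ⟨z, hz⟩
    exact mem_iUnion.mpr ⟨p, ⟨⟨z, hz⟩, hp, rfl⟩⟩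
  -- enumerate
  haveI : Infinite ((j : ℕ) × (Fin j → ℕ)) :=
    Infinite.of_injective (fun n => ⟨1, fun _ => n⟩)
      (fun a b h => by simpa using congrFun (eq_of_heq (Sigma.ext_iff.mp h).2) 0)
  obtain ⟨e⟩ : Nonempty (ℕ ≃ ((j : ℕ) × (Fin j → ℕ))) := nonempty_equiv_of_countable
  set H : ℕ → Set X := fun n => G (e n) with hH
  have hHunion : ⋃ n, H n = O := by
    rw [← hGunion]
    exact e.surjective.iUnion_comp G
  set N : Set ℕ := {n | (H n).Nonempty} with hNdef
  have hNinf : {n | n ∈ N}.Infinite := by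
    rw [setOf_mem_eq]
    by_contra hfin
    rw [Set.not_infinite] at hfin
    have hOeq : O = ⋃ n ∈ N, H n := by
      rw [← hHunion]
      refine Subset.antisymm (fun z hz => ?_) (iUnion₂_subset fun n _ => subset_iUnion H n)
      obtain ⟨n, hn⟩ := mem_iUnion.mp hz
      exact mem_iUnion₂.mpr ⟨n, ⟨z, hn⟩, hn⟩
    have hOclosed : IsClosed O := by
      rw [hOeq]
      exact hfin.isClosed_biUnion fun n _ => hGclosed _
    rcases isClopen_iff.mp ⟨hOclosed, hO⟩ with h | h
    · exact hOne.ne_empty h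
    · obtain ⟨z, hz⟩ := hOc
      rw [h] at hz
      exact hz (mem_univ z)
  refine ⟨fun n => Nat.rec Oᶜ (fun m _ => H (Nat.nth (· ∈ N) m)) n, ?_, ?_, ?_, ?_⟩
  · rintro (_ | m)
    · exact hO.isClosed_compl
    · exact hGclosed _
  · rintro (_ | m)
    · exact hOc
    · exact Nat.nth_mem_of_infinite hNinf m
  · have hdisj0 : ∀ m : ℕ, Disjoint (Oᶜ : Set X) (H (Nat.nth (· ∈ N) m)) :=
      fun m => disjoint_compl_left.mono_right (hGsubO _)
    rintro (_ | m) (_ | k) hne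
    · exact absurd rfl hne
    · exact hdisj0 k
    · exact (hdisj0 m).symm
    · have hmk : m ≠ k := fun h => hne (by rw [h])
      exact hGdisj (fun h => hmk (Nat.nth_injective hNinf (e.injective h)))
  · refine eq_univ_of_forall fun z => ?_
    by_cases hz : z ∈ O
    · rw [← hHunion] at hz
      obtain ⟨n, hn⟩ := mem_iUnion.mp hz
      have hnN : n ∈ N := ⟨z, hn⟩
      have : n ∈ range (Nat.nth (· ∈ N)) := by
        rw [Nat.range_nth_of_infinite hNinf]
        exact hnN
      obtain ⟨m, hm⟩ := this
      refine mem_iUnion.mpr ⟨m + 1, ?_⟩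
      show z ∈ H (Nat.nth (· ∈ N) m)
      rw [hm]
      exact hn
    · exact mem_iUnion.mpr ⟨0, hz⟩
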